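/- Let l ≥ 1 be an integer not divisible by 8, K a number field with ring of integers O_K, and 𝔭 ⊂ O_K a prime ideal lying over 3. If (x,y), (x',y') ∈ O_K² satisfy g^l(x,y) = (x,y) and g^l(x',y') = (x',y'), and x ≡ x' (mod 𝔭) and y ≡ y' (mod 𝔭), then x = x' and y = y'. In other words, the reduction-mod-𝔭 map from {(x,y) ∈ O_K² : g^l(x,y) = (x,y)} to (O_K/𝔭)² is injective. -/

import Mathlib

open NumberField

/-- The Hénon map `g(x,y) = (y, x + y - y³)`, over an arbitrary commutative ring. -/
def gR {R : Type*} [CommRing R] (P : R × R) : R × R :=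
  (P.2, P.1 + P.2 - P.2 ^ 3)

/-- Fibonacci modulo 3 has period 8. -/
private lemma fib3_add_eight (m : ℕ) :
    ((Nat.fib (m + 8) : ZMod 3) = Nat.fib m) ∧
      ((Nat.fib (m + 9) : ZMod 3) = Nat.fib (m + 1)) := by
  induction m with
  | zero => exact ⟨by decide, by decide⟩
  | succ m ih =>
    obtain ⟨h1, h2⟩ := ih
    refine ⟨h2, ?_⟩
    have e1 : m + 1 + 9 = (m + 8) + 2 := by ring
    have e2 : m + 1 + 1 = m + 2 := rfl
    have e3 : m + 8 + 1 = m + 9 := rfl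
    rw [e1, e2, Nat.fib_add_two (n := m + 8), Nat.fib_add_two (n := m),
      Nat.cast_add, Nat.cast_add, e3, h1, h2]

private lemma fib3_mod (m : ℕ) : (Nat.fib m : ZMod 3) = Nat.fib (m % 8) := by
  conv_lhs => rw [← Nat.mod_add_div m 8]
  generalize m / 8 = q
  induction q with
  | zero => simp
  | succ q ih =>
    have h : m % 8 + 8 * (q + 1) = (m % 8 + 8 * q) + 8 := by ring
    rw [h, (fib3_add_eight _).1, ih]

private lemma three_not_dvd_det (m : ℕ) (h : m % 8 ≠ 7) :
    ¬ (3 : ℤ) ∣ ((Nat.fib m : ℤ) - 1) * ((Nat.fib (m + 2) : ℤ) - 1)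
        - (Nat.fib (m + 1) : ℤ) ^ 2 := by
  intro hdvd
  have h0 : ((((Nat.fib m : ℤ) - 1) * ((Nat.fib (m + 2) : ℤ) - 1)
      - (Nat.fib (m + 1) : ℤ) ^ 2 : ℤ) : ZMod 3) = 0 :=
    (ZMod.intCast_zmod_eq_zero_iff_dvd _ 3).mpr hdvd
  push_cast at h0
  rw [fib3_mod m, fib3_mod (m + 1), fib3_mod (m + 2)] at h0
  have h1 : (m + 1) % 8 = (m % 8 + 1) % 8 := by omega
  have h2 : (m + 2) % 8 = (m % 8 + 2) % 8 := by omega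
  rw [h1, h2] at h0
  have hr : m % 8 < 8 := Nat.mod_lt _ (by norm_num)
  set r := m % 8 with hrdef
  interval_cases r <;> first
  | exact absurd rfl h
  | (revert h0; decide)

/-- The "linearized" difference sequence: `fibA a b k` is the value that the difference
of the first coordinates of the `k`-th iterates takes modulo `𝔭^(n+1)`. -/
private def fibA {R : Type*} [CommRing R] (a b : R) : ℕ → R
  | 0 => a
  | (k + 1) => (Nat.fib k : R) * a + (Nat.fib (k + 1) : R) * b

private lemma fibA_add_two {R : Type*} [CommRing R] (a b : R) (k : ℕ) :
    fibA a b (k + 2) = fibA a b k + fibA a b (k + 1) := by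
  cases k with
  | zero => simp [fibA, Nat.fib]
  | succ j =>
    show (Nat.fib (j + 2) : R) * a + (Nat.fib (j + 3) : R) * b
        = ((Nat.fib j : R) * a + (Nat.fib (j + 1) : R) * b)
          + ((Nat.fib (j + 1) : R) * a + (Nat.fib (j + 2) : R) * b)
    have e1 : Nat.fib (j + 2) = Nat.fib j + Nat.fib (j + 1) := Nat.fib_add_two
    have e2 : Nat.fib (j + 3) = Nat.fib (j + 1) + Nat.fib (j + 2) := Nat.fib_add_two
    rw [e2, e1]
    push_cast
    ring

/-- Main congruence tracking lemma for iterates of the Hénon map. -/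
private lemma iter_diff {R : Type*} [CommRing R] (𝔭 : Ideal R) (h3 : (3 : R) ∈ 𝔭)
    (n : ℕ) (P Q : R × R)
    (ha1 : P.1 - Q.1 ∈ 𝔭) (hb1 : P.2 - Q.2 ∈ 𝔭)
    (han : P.1 - Q.1 ∈ 𝔭 ^ n) (hbn : P.2 - Q.2 ∈ 𝔭 ^ n) (k : ℕ) :
    ((gR^[k] P).1 - (gR^[k] Q).1 ∈ 𝔭) ∧ ((gR^[k] P).2 - (gR^[k] Q).2 ∈ 𝔭) ∧
    ((gR^[k] P).1 - (gR^[k] Q).1 ∈ 𝔭 ^ n) ∧ ((gR^[k] P).2 - (gR^[k] Q).2 ∈ 𝔭 ^ n) ∧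
    ((gR^[k] P).1 - (gR^[k] Q).1 - fibA (P.1 - Q.1) (P.2 - Q.2) k ∈ 𝔭 ^ (n + 1)) ∧
    ((gR^[k] P).2 - (gR^[k] Q).2 - fibA (P.1 - Q.1) (P.2 - Q.2) (k + 1) ∈ 𝔭 ^ (n + 1)) := by
  set a := P.1 - Q.1
  set b := P.2 - Q.2
  induction k with
  | zero =>
    refine ⟨ha1, hb1, han, hbn, by simp [fibA, a], ?_⟩
    have h0 : (gR^[0] P).2 - (gR^[0] Q).2 - fibA a b (0 + 1) = 0 := by
      simp [fibA, b]
    rw [h0]; exact zero_mem _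
  | succ k ih =>
    obtain ⟨hak, hbk, hakn, hbkn, hac, hbc⟩ := ih
    set X := gR^[k] P with hX
    set Y := gR^[k] Q with hY
    have hPs : gR^[k + 1] P = gR X := Function.iterate_succ_apply' gR k P
    have hQs : gR^[k + 1] Q = gR Y := Function.iterate_succ_apply' gR k Q
    rw [hPs, hQs]
    -- first coordinate of the new difference is the old second coordinate difference
    have e1 : (gR X).1 - (gR Y).1 = X.2 - Y.2 := rfl
    -- s ∈ 𝔭
    have hs : X.2 ^ 2 + X.2 * Y.2 + Y.2 ^ 2 ∈ 𝔭 := by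
      have hid : X.2 ^ 2 + X.2 * Y.2 + Y.2 ^ 2
          = 3 * Y.2 ^ 2 + 3 * Y.2 * (X.2 - Y.2) + (X.2 - Y.2) ^ 2 := by ring
      rw [hid]
      exact add_mem (add_mem (Ideal.mul_mem_right _ _ h3)
        (Ideal.mul_mem_left _ _ hbk)) (by
          rw [sq]; exact Ideal.mul_mem_left _ _ hbk)
    -- second coordinate of the new difference
    have e2 : (gR X).2 - (gR Y).2
        = (X.1 - Y.1) + (X.2 - Y.2) - (X.2 - Y.2) * (X.2 ^ 2 + X.2 * Y.2 + Y.2 ^ 2) := by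
      show (X.1 + X.2 - X.2 ^ 3) - (Y.1 + Y.2 - Y.2 ^ 3) = _
      ring
    have hmul1 : (X.2 - Y.2) * (X.2 ^ 2 + X.2 * Y.2 + Y.2 ^ 2) ∈ 𝔭 :=
      Ideal.mul_mem_left _ _ hs
    have hmuln : (X.2 - Y.2) * (X.2 ^ 2 + X.2 * Y.2 + Y.2 ^ 2) ∈ 𝔭 ^ n :=
      Ideal.mul_mem_right _ _ hbkn
    have hmuln1 : (X.2 - Y.2) * (X.2 ^ 2 + X.2 * Y.2 + Y.2 ^ 2) ∈ 𝔭 ^ (n + 1) := by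
      rw [pow_succ]
      exact Ideal.mul_mem_mul hbkn hs
    refine ⟨by rw [e1]; exact hbk, ?_, by rw [e1]; exact hbkn, ?_, ?_, ?_⟩
    · rw [e2]; exact sub_mem (add_mem hak hbk) hmul1
    · rw [e2]; exact sub_mem (add_mem hakn hbkn) hmuln
    · rw [e1]; exact hbc
    · rw [e2, fibA_add_two]
      have hid : (X.1 - Y.1) + (X.2 - Y.2)
            - (X.2 - Y.2) * (X.2 ^ 2 + X.2 * Y.2 + Y.2 ^ 2)
            - (fibA a b k + fibA a b (k + 1))
          = ((X.1 - Y.1) - fibA a b k) + ((X.2 - Y.2) - fibA a b (k + 1))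
            - (X.2 - Y.2) * (X.2 ^ 2 + X.2 * Y.2 + Y.2 ^ 2) := by ring
      rw [hid]
      exact sub_mem (add_mem hac hbc) hmuln1

private lemma mem_pow_of_mul_mem {R : Type*} [CommRing R] [IsDomain R] [IsDedekindDomain R]
    (𝔭 : Ideal R) (hp : 𝔭.IsPrime) (hbot : 𝔭 ≠ ⊥) {z c : R} (hz : z ∉ 𝔭) (n : ℕ)
    (h : z * c ∈ 𝔭 ^ n) : c ∈ 𝔭 ^ n := by
  have hprime : Prime 𝔭 := Ideal.prime_of_isPrime hbot hp
  rw [← Ideal.dvd_span_singleton] at h ⊢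
  rw [← Ideal.span_singleton_mul_span_singleton] at h
  exact hprime.pow_dvd_of_dvd_mul_left n
    (fun hc => hz (Ideal.dvd_span_singleton.mp hc)) h

/-- For `l ≥ 1` not divisible by `8`, `K` a number field, `𝔭 ⊂ O_K` a prime ideal lying
over `3`, the reduction map modulo `𝔭` is injective on the set of points of `O_K²` fixed
by `g^l`. -/
theorem stmt6 (l : ℕ) (hl : 1 ≤ l) (h8 : ¬ (8 ∣ l))
    (K : Type*) [Field K] [NumberField K]
    (𝔭 : Ideal (𝓞 K)) (hprime : 𝔭.IsPrime) (h3 : (3 : 𝓞 K) ∈ 𝔭)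
    (P Q : 𝓞 K × 𝓞 K) (hP : gR^[l] P = P) (hQ : gR^[l] Q = Q)
    (hx : P.1 - Q.1 ∈ 𝔭) (hy : P.2 - Q.2 ∈ 𝔭) :
    P = Q := by
  obtain ⟨m, rfl⟩ : ∃ m, l = m + 1 := ⟨l - 1, by omega⟩
  have hm7 : m % 8 ≠ 7 := by omega
  set a := P.1 - Q.1 with hadef
  set b := P.2 - Q.2 with hbdef
  set d : ℤ := ((Nat.fib m : ℤ) - 1) * ((Nat.fib (m + 2) : ℤ) - 1)
      - (Nat.fib (m + 1) : ℤ) ^ 2 with hddef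
  have hdvd : ¬ (3 : ℤ) ∣ d := three_not_dvd_det m hm7
  -- `d` is not in `𝔭`
  have hdnot : (d : 𝓞 K) ∉ 𝔭 := by
    intro hmem
    have hmod : d % 3 = 1 ∨ d % 3 = 2 := by omega
    obtain ⟨u, v, huv⟩ : ∃ u v : ℤ, 3 * u + d * v = 1 := by
      rcases hmod with h | h
      · exact ⟨-(d / 3), 1, by omega⟩
      · exact ⟨d / 3 + 1, -1, by omega⟩
    have h1 : (1 : 𝓞 K) ∈ 𝔭 := by
      have : ((3 * u + d * v : ℤ) : 𝓞 K) ∈ 𝔭 := by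
        push_cast
        exact add_mem (Ideal.mul_mem_right _ _ h3) (Ideal.mul_mem_right _ _ hmem)
      rwa [huv, Int.cast_one] at this
    exact hprime.ne_top (Ideal.eq_top_iff_one 𝔭 |>.mpr h1)
  have hbot : 𝔭 ≠ ⊥ := by
    intro hb
    rw [hb] at h3
    have h30 : (3 : 𝓞 K) ≠ 0 := by norm_num
    exact h30 h3
  -- the key induction: a, b ∈ 𝔭^n for all n ≥ 1
  have key : ∀ n : ℕ, a ∈ 𝔭 ^ n ∧ b ∈ 𝔭 ^ n := by
    intro n
    induction n with
    | zero => simp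
    | succ n ih =>
      obtain ⟨han, hbn⟩ := ih
      have H := iter_diff 𝔭 h3 n P Q hx hy han hbn (m + 1)
      rw [hP, hQ] at H
      obtain ⟨-, -, -, -, h5, h6⟩ := H
      -- h5 : a - fibA a b (m+1) ∈ 𝔭^(n+1), h6 : b - fibA a b (m+2) ∈ 𝔭^(n+1)
      have hu : ((Nat.fib m : 𝓞 K) - 1) * a + (Nat.fib (m + 1) : 𝓞 K) * b ∈ 𝔭 ^ (n + 1) := by
        have hne := neg_mem h5
        have hid : ((Nat.fib m : 𝓞 K) - 1) * a + (Nat.fib (m + 1) : 𝓞 K) * b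
            = -(a - fibA a b (m + 1)) := by
          show _ = -(a - ((Nat.fib m : 𝓞 K) * a + (Nat.fib (m + 1) : 𝓞 K) * b))
          ring
        rw [hid]; exact hne
      have hv : (Nat.fib (m + 1) : 𝓞 K) * a + ((Nat.fib (m + 2) : 𝓞 K) - 1) * b
          ∈ 𝔭 ^ (n + 1) := by
        have hne := neg_mem h6
        have hid : (Nat.fib (m + 1) : 𝓞 K) * a + ((Nat.fib (m + 2) : 𝓞 K) - 1) * b
            = -(b - fibA a b (m + 2)) := by
          show _ = -(b - ((Nat.fib (m + 1) : 𝓞 K) * a + (Nat.fib (m + 2) : 𝓞 K) * b))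
          ring
        rw [hid]; exact hne
      have hda : (d : 𝓞 K) * a ∈ 𝔭 ^ (n + 1) := by
        have hid : (d : 𝓞 K) * a
            = ((Nat.fib (m + 2) : 𝓞 K) - 1)
                * (((Nat.fib m : 𝓞 K) - 1) * a + (Nat.fib (m + 1) : 𝓞 K) * b)
              - (Nat.fib (m + 1) : 𝓞 K)
                * ((Nat.fib (m + 1) : 𝓞 K) * a + ((Nat.fib (m + 2) : 𝓞 K) - 1) * b) := by
          rw [hddef]; push_cast; ring
        rw [hid]
        exact sub_mem (Ideal.mul_mem_left _ _ hu) (Ideal.mul_mem_left _ _ hv)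
      have hdb : (d : 𝓞 K) * b ∈ 𝔭 ^ (n + 1) := by
        have hid : (d : 𝓞 K) * b
            = ((Nat.fib m : 𝓞 K) - 1)
                * ((Nat.fib (m + 1) : 𝓞 K) * a + ((Nat.fib (m + 2) : 𝓞 K) - 1) * b)
              - (Nat.fib (m + 1) : 𝓞 K)
                * (((Nat.fib m : 𝓞 K) - 1) * a + (Nat.fib (m + 1) : 𝓞 K) * b) := by
          rw [hddef]; push_cast; ring
        rw [hid]
        exact sub_mem (Ideal.mul_mem_left _ _ hv) (Ideal.mul_mem_left _ _ hu)
      exact ⟨mem_pow_of_mul_mem 𝔭 hprime hbot hdnot _ hda,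
        mem_pow_of_mul_mem 𝔭 hprime hbot hdnot _ hdb⟩
  -- Krull intersection
  have hKrull : (⨅ i : ℕ, 𝔭 ^ i) = ⊥ :=
    Ideal.iInf_pow_eq_bot_of_isDomain 𝔭 hprime.ne_top
  have ha0 : a = 0 := by
    have : a ∈ ⨅ i : ℕ, 𝔭 ^ i := Ideal.mem_iInf.mpr fun i => (key i).1
    rw [hKrull] at this
    simpa using this
  have hb0 : b = 0 := by
    have : b ∈ ⨅ i : ℕ, 𝔭 ^ i := Ideal.mem_iInf.mpr fun i => (key i).2
    rw [hKrull] at this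
    simpa using this
  have h1 : P.1 = Q.1 := sub_eq_zero.mp ha0
  have h2 : P.2 = Q.2 := sub_eq_zero.mp hb0
  exact Prod.ext h1 h2
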